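/- Let p be a prime, a ∈ ℚ_p with |a|_p > 1 such that √(|a|_p) is not an integer power of p, and f(x) = x³ + ax². If 1/|a|_p < |x|_p < 1, then there exists n such that |fⁿ(x)|_p > |a|_p, and hence |fᵏ(x)|_p → ∞ as k → ∞. -/

import Mathlib

section Aux

variable {p : ℕ} [Fact p.Prime]

lemma fstep_low (a y : ℚ_[p]) (h : ‖y‖ < ‖a‖) : ‖y ^ 3 + a * y ^ 2‖ = ‖a‖ * ‖y‖ ^ 2 := by
  rcases eq_or_ne y 0 with rfl | hy
  · simp
  · have hy0 : 0 < ‖y‖ := norm_pos_iff.mpr hy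
    have h3 : ‖y ^ 3‖ < ‖a * y ^ 2‖ := by
      rw [norm_mul, norm_pow, norm_pow]
      have h' : ‖y‖ ^ 3 = ‖y‖ * ‖y‖ ^ 2 := by ring
      rw [h']
      exact mul_lt_mul_of_pos_right h (by positivity)
    have hmax := Padic.add_eq_max_of_ne (q := y ^ 3) (r := a * y ^ 2) (ne_of_lt h3)
    rw [hmax, max_eq_right h3.le, norm_mul, norm_pow]

lemma fstep_high (a y : ℚ_[p]) (h : ‖a‖ < ‖y‖) : ‖y ^ 3 + a * y ^ 2‖ = ‖y‖ ^ 3 := by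
  have hy0 : 0 < ‖y‖ := lt_of_le_of_lt (norm_nonneg a) h
  have h3 : ‖a * y ^ 2‖ < ‖y ^ 3‖ := by
    rw [norm_mul, norm_pow, norm_pow]
    have h' : ‖y‖ ^ 3 = ‖y‖ * ‖y‖ ^ 2 := by ring
    rw [h']
    exact mul_lt_mul_of_pos_right h (by positivity)
  have hmax := Padic.add_eq_max_of_ne (q := y ^ 3) (r := a * y ^ 2) (ne_of_lt h3).symm
  rw [hmax, max_eq_left h3.le, norm_pow]

lemma growth (a : ℚ_[p]) (f : ℚ_[p] → ℚ_[p]) (hf : ∀ x, f x = x ^ 3 + a * x ^ 2)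
    (y : ℚ_[p]) (ha1 : 1 < ‖a‖) (hy : ‖a‖ < ‖y‖) :
    ∀ k : ℕ, ‖y‖ ^ (k + 1) ≤ ‖f^[k] y‖ ∧ ‖a‖ < ‖f^[k] y‖ := by
  intro k
  induction k with
  | zero => simpa using hy
  | succ k ih =>
    obtain ⟨h1, h2⟩ := ih
    have hy1 : 1 < ‖y‖ := lt_trans ha1 hy
    have hz1 : (1 : ℝ) < ‖f^[k] y‖ := lt_trans ha1 h2
    have hstep : ‖f^[k + 1] y‖ = ‖f^[k] y‖ ^ 3 := by
      rw [Function.iterate_succ_apply', hf]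
      exact fstep_high a _ h2
    constructor
    · rw [hstep]
      calc ‖y‖ ^ (k + 1 + 1) = ‖y‖ ^ (k + 1) * ‖y‖ := by ring
        _ ≤ ‖f^[k] y‖ * ‖y‖ := mul_le_mul_of_nonneg_right h1 (by positivity)
        _ ≤ ‖f^[k] y‖ * (‖f^[k] y‖ * ‖f^[k] y‖) := by
            have hyk : ‖y‖ ≤ ‖f^[k] y‖ :=
              le_trans (le_self_pow₀ hy1.le (Nat.succ_ne_zero k)) h1
            have : ‖y‖ ≤ ‖f^[k] y‖ * ‖f^[k] y‖ := by nlinarith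
            exact mul_le_mul_of_nonneg_left this (by positivity)
        _ = ‖f^[k] y‖ ^ 3 := by ring
    · rw [hstep]
      have hzz : ‖f^[k] y‖ ≤ ‖f^[k] y‖ ^ 3 := le_self_pow₀ hz1.le (by norm_num)
      linarith

lemma escape_aux (a : ℚ_[p]) (u : ℤ) (hau : ‖a‖ = (p : ℝ) ^ u) (hu0 : 0 < u) (hu : Odd u)
    (f : ℚ_[p] → ℚ_[p]) (hf : ∀ x, f x = x ^ 3 + a * x ^ 2) :
    ∀ N : ℕ, ∀ e : ℤ, e.natAbs ≤ N → -u < e → e < 0 → ∀ y : ℚ_[p],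
      ‖y‖ = (p : ℝ) ^ e → ∃ n : ℕ, ‖a‖ < ‖f^[n] y‖ := by
  have hp1 : (1 : ℝ) < p := by exact_mod_cast (Fact.out : p.Prime).one_lt
  have hp0 : (0 : ℝ) < p := lt_trans one_pos hp1
  intro N
  induction N with
  | zero => intro e hN h1 h2 y hy; omega
  | succ N ih =>
    intro e hN h1 h2 y hy
    set e' : ℤ := u + 2 * e with he'
    have hfy : ‖f y‖ = (p : ℝ) ^ e' := by
      rw [hf, fstep_low a y (by rw [hy, hau]; exact zpow_lt_zpow_right₀ hp1 (by omega)),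
        hy, hau, ← zpow_natCast ((p : ℝ) ^ e) 2, ← zpow_mul, ← zpow_add₀ hp0.ne']
      rw [he']
      ring_nf
    have he'ne : e' ≠ 0 := by
      intro h
      rcases hu with ⟨m, hm⟩
      omega
    rcases lt_or_gt_of_ne he'ne with hneg | hpos
    · obtain ⟨n, hn⟩ := ih e' (by omega) (by omega) hneg (f y) hfy
      exact ⟨n + 1, by rwa [Function.iterate_succ_apply]⟩
    · -- 0 < e' < u : one more step pushes past ‖a‖
      have he'u : e' < u := by omega
      have hffy : ‖f (f y)‖ = (p : ℝ) ^ (u + 2 * e') := by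
        rw [hf, fstep_low a (f y) (by rw [hfy, hau]; exact zpow_lt_zpow_right₀ hp1 he'u),
          hfy, hau, ← zpow_natCast ((p : ℝ) ^ e') 2, ← zpow_mul, ← zpow_add₀ hp0.ne']
        ring_nf
      refine ⟨2, ?_⟩
      have : f^[2] y = f (f y) := by
        rw [Function.iterate_succ_apply, Function.iterate_one]
      rw [this, hffy, hau]
      exact zpow_lt_zpow_right₀ hp1 (by omega)

end Aux

theorem inner_annulus_escape (p : ℕ) [Fact p.Prime] (a : ℚ_[p]) (ha : 1 < ‖a‖)
    (hsqrt : ∀ k : ℤ, Real.sqrt ‖a‖ ≠ (p : ℝ) ^ k)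
    (f : ℚ_[p] → ℚ_[p]) (hf : ∀ x, f x = x ^ 3 + a * x ^ 2)
    (x : ℚ_[p]) (hx1 : 1 / ‖a‖ < ‖x‖) (hx2 : ‖x‖ < 1) :
    (∃ n : ℕ, ‖a‖ < ‖f^[n] x‖) ∧
      Filter.Tendsto (fun k => ‖f^[k] x‖) Filter.atTop Filter.atTop := by
  have hp1 : (1 : ℝ) < p := by exact_mod_cast (Fact.out : p.Prime).one_lt
  have hp0 : (0 : ℝ) < p := lt_trans one_pos hp1
  have ha0 : a ≠ 0 := by intro h; rw [h, norm_zero] at ha; linarith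
  have hx0 : x ≠ 0 := by
    intro h
    rw [h, norm_zero] at hx1
    have : (0 : ℝ) < 1 / ‖a‖ := by positivity
    linarith
  set u : ℤ := -a.valuation with hu
  have hau : ‖a‖ = (p : ℝ) ^ u := Padic.norm_eq_zpow_neg_valuation ha0
  have hu0 : 0 < u := by
    by_contra h
    push_neg at h
    have : ‖a‖ ≤ 1 := by
      rw [hau]
      exact zpow_le_one_of_nonpos₀ hp1.le h
    linarith
  have huodd : Odd u := by
    rcases Int.even_or_odd u with ⟨m, hm⟩ | h
    · exfalso
      apply hsqrt m
      rw [hau, hm]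
      have : (p : ℝ) ^ (m + m) = ((p : ℝ) ^ m) ^ 2 := by
        rw [← zpow_natCast ((p : ℝ) ^ m) 2, ← zpow_mul]
        ring_nf
      rw [this, Real.sqrt_sq (by positivity)]
    · exact h
  set e : ℤ := -x.valuation with he
  have hxe : ‖x‖ = (p : ℝ) ^ e := Padic.norm_eq_zpow_neg_valuation hx0
  have he2 : e < 0 := by
    by_contra h
    push_neg at h
    have : (1 : ℝ) ≤ ‖x‖ := by
      rw [hxe]
      calc (1:ℝ) = (p:ℝ) ^ (0:ℤ) := by simp
        _ ≤ (p:ℝ) ^ e := zpow_le_zpow_right₀ hp1.le h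
    linarith
  have he1 : -u < e := by
    by_contra h
    push_neg at h
    have h1 : ‖x‖ ≤ (p : ℝ) ^ (-u) := by
      rw [hxe]
      exact zpow_le_zpow_right₀ hp1.le h
    have h2 : (p : ℝ) ^ (-u) = 1 / ‖a‖ := by
      rw [hau, zpow_neg, one_div]
    rw [h2] at h1
    linarith
  obtain ⟨n, hn⟩ := escape_aux a u hau hu0 huodd f hf e.natAbs e le_rfl he1 he2 x hxe
  refine ⟨⟨n, hn⟩, ?_⟩
  -- tendsto part
  set y : ℚ_[p] := f^[n] x with hy
  have hy1 : 1 < ‖y‖ := lt_trans ha hn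
  rw [Filter.tendsto_atTop]
  intro b
  obtain ⟨m, hm⟩ := pow_unbounded_of_one_lt b hy1
  rw [Filter.eventually_atTop]
  refine ⟨n + m, fun k hk => ?_⟩
  have hiter : f^[k] x = f^[k - n] y := by
    rw [hy, ← Function.iterate_add_apply]
    congr 1
    omega
  have hg := (growth a f hf y ha hn (k - n)).1
  have hmono : ‖y‖ ^ m ≤ ‖y‖ ^ (k - n + 1) :=
    pow_le_pow_right₀ hy1.le (by omega)
  rw [hiter]
  calc b ≤ ‖y‖ ^ m := hm.le
    _ ≤ ‖y‖ ^ (k - n + 1) := hmono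
    _ ≤ ‖f^[k - n] y‖ := hg
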